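/- Let E be an m × n matrix with positive entries and let H = [[0, E],[Eᵀ, 0]]. Then the Perron–Frobenius eigenvalue of H equals the spectral norm ‖E‖_{2,2}, is positive, and there exists an eigenvector z = [g; h] of H with eigenvalue ‖E‖_{2,2} such that g ∈ ℝ^m and h ∈ ℝ^n both have all entries strictly positive; equivalently, E h = ‖E‖_{2,2} g and Eᵀ g = ‖E‖_{2,2} h with g, h > 0. -/

import Mathlib

open Matrix

/-- The spectral norm (largest singular value) of a rectangular real matrix, as the
operator norm of the induced map between Euclidean spaces. -/
noncomputable def rectSpectralNorm {m n : ℕ} (E : Matrix (Fin m) (Fin n) ℝ) : ℝ :=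
  ‖LinearMap.toContinuousLinearMap (Matrix.toEuclideanLin E)‖

/-- Perron-Frobenius for H = [[0,E],[Eᵀ,0]] with E entrywise positive: the leading
eigenvalue of H equals the spectral norm ‖E‖₂,₂, is positive, and admits a strictly
positive eigenvector [g;h], i.e. Eh = ‖E‖g and Eᵀg = ‖E‖h with g,h > 0. -/
theorem perron_frobenius_bipartite
    {m n : ℕ} [NeZero m] [NeZero n] (E : Matrix (Fin m) (Fin n) ℝ)
    (hE : ∀ i j, 0 < E i j) :
    0 < rectSpectralNorm E ∧
    ∃ (g : Fin m → ℝ) (h : Fin n → ℝ),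
      (∀ i, 0 < g i) ∧ (∀ j, 0 < h j) ∧
      E *ᵥ h = rectSpectralNorm E • g ∧
      Eᵀ *ᵥ g = rectSpectralNorm E • h ∧
      (Matrix.fromBlocks 0 E Eᵀ 0) *ᵥ (Sum.elim g h)
        = rectSpectralNorm E • Sum.elim g h := by
  classical
  set f : EuclideanSpace ℝ (Fin n) →L[ℝ] EuclideanSpace ℝ (Fin m) :=
    LinearMap.toContinuousLinearMap (Matrix.toEuclideanLin E) with hf
  have hσ : rectSpectralNorm E = ‖f‖ := rfl
  set σ := rectSpectralNorm E with hσdef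
  have hfx : ∀ (x : EuclideanSpace ℝ (Fin n)) (i : Fin m), f x i = (E *ᵥ x) i := fun _ _ => rfl
  -- maximizer on sphere
  have hne : (Metric.sphere (0 : EuclideanSpace ℝ (Fin n)) 1).Nonempty := by
    refine ⟨EuclideanSpace.single ⟨0, Nat.pos_of_ne_zero (NeZero.ne n)⟩ (1 : ℝ), ?_⟩
    simp [mem_sphere_zero_iff_norm, EuclideanSpace.norm_single]
  obtain ⟨x₀, hx₀mem, hx₀max⟩ :=
    (isCompact_sphere (0 : EuclideanSpace ℝ (Fin n)) 1).exists_isMaxOn hne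
      (f.continuous.norm.continuousOn)
  have hx₀norm : ‖x₀‖ = 1 := mem_sphere_zero_iff_norm.1 hx₀mem
  -- norm attained at x₀
  have hle : ∀ x : EuclideanSpace ℝ (Fin n), ‖f x‖ ≤ ‖f x₀‖ * ‖x‖ := by
    intro x
    rcases eq_or_ne x 0 with rfl | hx
    · simp
    · have hnx : (0:ℝ) < ‖x‖ := norm_pos_iff.2 hx
      have h1 : (‖x‖⁻¹ • x) ∈ Metric.sphere (0 : EuclideanSpace ℝ (Fin n)) 1 := by
        simp [mem_sphere_zero_iff_norm, norm_smul, abs_of_pos (inv_pos.2 hnx),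
          inv_mul_cancel₀ hnx.ne']
      have h2 := hx₀max h1
      simp only [Set.mem_setOf_eq] at h2
      calc ‖f x‖ = ‖x‖ * (‖x‖⁻¹ * ‖f x‖) := by field_simp
        _ ≤ ‖x‖ * ‖f x₀‖ := by
            apply mul_le_mul_of_nonneg_left _ hnx.le
            calc ‖x‖⁻¹ * ‖f x‖ = ‖f (‖x‖⁻¹ • x)‖ := by
                  rw [_root_.map_smul, norm_smul, norm_inv, norm_norm]
              _ ≤ ‖f x₀‖ := h2
        _ = ‖f x₀‖ * ‖x‖ := mul_comm _ _
  have hattain : σ = ‖f x₀‖ := by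
    refine le_antisymm (f.opNorm_le_bound (norm_nonneg _) hle) ?_
    simpa [hx₀norm, hσ] using f.le_opNorm x₀
  -- replace x₀ by its entrywise absolute value
  set h : EuclideanSpace ℝ (Fin n) := (WithLp.equiv 2 _).symm (fun j => |x₀ j|) with hh
  have hhj : ∀ j, h j = |x₀ j| := fun _ => rfl
  have hhnorm : ‖h‖ = 1 := by
    rw [← hx₀norm, EuclideanSpace.norm_eq, EuclideanSpace.norm_eq]
    congr 1
    refine Finset.sum_congr rfl fun j _ => ?_
    rw [hhj]; simp [sq_abs]
  have hmulpos : ∀ (y : Fin n → ℝ), (∀ j, 0 ≤ y j) → (∃ j, 0 < y j) →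
      ∀ i, 0 < (E *ᵥ y) i := by
    intro y hy ⟨j₀, hj₀⟩ i
    have : (0:ℝ) < E i j₀ * y j₀ := mul_pos (hE i j₀) hj₀
    calc (0:ℝ) < E i j₀ * y j₀ := this
      _ ≤ ∑ j, E i j * y j :=
        Finset.single_le_sum (fun j _ => mul_nonneg (hE i j).le (hy j)) (Finset.mem_univ j₀)
      _ = (E *ᵥ y) i := rfl
  -- pointwise bound
  have hptwise : ∀ i, |(E *ᵥ (x₀ : Fin n → ℝ)) i| ≤ (E *ᵥ (h : Fin n → ℝ)) i := by
    intro i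
    calc |(E *ᵥ (x₀ : Fin n → ℝ)) i| = |∑ j, E i j * x₀ j| := rfl
      _ ≤ ∑ j, |E i j * x₀ j| := Finset.abs_sum_le_sum_abs _ _
      _ = ∑ j, E i j * |x₀ j| := by
          refine Finset.sum_congr rfl fun j _ => ?_
          rw [abs_mul, abs_of_pos (hE i j)]
      _ = (E *ᵥ (h : Fin n → ℝ)) i := by
          refine (Finset.sum_congr rfl fun j _ => ?_)
          rw [hhj]
  have hnorm_le : ‖f x₀‖ ≤ ‖f h‖ := by
    rw [EuclideanSpace.norm_eq, EuclideanSpace.norm_eq]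
    apply Real.sqrt_le_sqrt
    refine Finset.sum_le_sum fun i _ => ?_
    have := hptwise i
    have h1 : ‖f x₀ i‖ ≤ ‖f h i‖ := by
      rw [hfx, hfx, Real.norm_eq_abs, Real.norm_eq_abs,
        abs_of_nonneg ((abs_nonneg _).trans this)]
      exact this
    exact pow_le_pow_left₀ (norm_nonneg _) h1 2
  have hfh : ‖f h‖ = σ := le_antisymm (by simpa [hhnorm, hσ] using f.le_opNorm h)
    (hattain ▸ hnorm_le)
  have hhnn : ∀ j, (0:ℝ) ≤ h j := fun j => (hhj j) ▸ abs_nonneg _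
  have hhne : h ≠ 0 := fun h0 => by simp [h0] at hhnorm
  have hhex : ∃ j, 0 < h j := by
    by_contra hc
    push_neg at hc
    apply hhne
    ext j
    exact le_antisymm (hc j) (hhnn j)
  have hEh : ∀ i, 0 < (E *ᵥ (h : Fin n → ℝ)) i := hmulpos _ hhnn hhex
  have hσpos : 0 < σ := by
    rw [hσdef] at hfh ⊢
    rw [← hfh]
    apply norm_pos_iff.2
    intro h0
    have := hEh ⟨0, Nat.pos_of_ne_zero (NeZero.ne m)⟩
    rw [← hfx, h0] at this
    simp at this
  -- self-adjoint operator T = f† ∘L f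
  set T : EuclideanSpace ℝ (Fin n) →L[ℝ] EuclideanSpace ℝ (Fin n) :=
    ContinuousLinearMap.adjoint f ∘L f with hT
  have hTsa : IsSelfAdjoint T := by
    rw [ContinuousLinearMap.isSelfAdjoint_iff', hT, ContinuousLinearMap.adjoint_comp,
      ContinuousLinearMap.adjoint_adjoint]
  have hre : ∀ x, T.reApplyInnerSelf x = ‖f x‖ ^ 2 := by
    intro x
    have h1 : (inner ℝ (T x) x : ℝ) = inner ℝ (f x) (f x) :=
      ContinuousLinearMap.adjoint_inner_left f x (f x)
    have h2 : T.reApplyInnerSelf x = (inner ℝ (T x) x : ℝ) := rfl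
    rw [h2, h1]
    exact real_inner_self_eq_norm_sq _
  have hmax' : IsMaxOn T.reApplyInnerSelf (Metric.sphere (0:EuclideanSpace ℝ (Fin n)) ‖h‖) h := by
    intro x hx
    have hx1 : x ∈ Metric.sphere (0:EuclideanSpace ℝ (Fin n)) 1 := by rwa [hhnorm] at hx
    have h2 : ‖f x‖ ≤ ‖f h‖ := (hx₀max hx1).trans hnorm_le
    simp only [Set.mem_setOf_eq, hre]
    exact pow_le_pow_left₀ (norm_nonneg _) h2 2
  have heig := hTsa.eq_smul_self_of_isLocalExtrOn_real (Or.inr hmax'.localize)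
  have hray : T.rayleighQuotient h = σ ^ 2 := by
    rw [ContinuousLinearMap.rayleighQuotient, hre, hhnorm, hfh]
    simp
  rw [hray] at heig
  -- coordinates
  have hadj : ContinuousLinearMap.adjoint f =
      LinearMap.toContinuousLinearMap (Matrix.toEuclideanLin Eᵀ) := by
    have hct : Eᴴ = Eᵀ := by simp
    rw [← hct, Matrix.toEuclideanLin_conjTranspose_eq_adjoint,
      LinearMap.adjoint_toContinuousLinearMap]
  have hchain : ∀ j, (Eᵀ *ᵥ (E *ᵥ (h : Fin n → ℝ))) j = σ ^ 2 * h j := by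
    intro j
    have h1 : T h = (σ ^ 2 : ℝ) • h := heig
    have h2 : (Eᵀ *ᵥ (E *ᵥ (h : Fin n → ℝ))) j = T h j := by
      rw [hT, ContinuousLinearMap.comp_apply, hadj]
      rfl
    rw [h2, h1]
    rfl
  have hhpos : ∀ j, 0 < h j := by
    intro j
    have h1 : 0 < (Eᵀ *ᵥ (E *ᵥ (h : Fin n → ℝ))) j := by
      have : (0:ℝ) < Eᵀ j ⟨0, Nat.pos_of_ne_zero (NeZero.ne m)⟩
          * (E *ᵥ (h : Fin n → ℝ)) ⟨0, Nat.pos_of_ne_zero (NeZero.ne m)⟩ :=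
        mul_pos (hE _ _) (hEh _)
      calc (0:ℝ) < _ := this
        _ ≤ ∑ i, Eᵀ j i * (E *ᵥ (h : Fin n → ℝ)) i :=
          Finset.single_le_sum (fun i _ => mul_nonneg (hE i j).le (hEh i).le)
            (Finset.mem_univ _)
        _ = (Eᵀ *ᵥ (E *ᵥ (h : Fin n → ℝ))) j := rfl
    have h2 := hchain j
    rw [h2] at h1
    by_contra hc
    push_neg at hc
    have h3 : σ ^ 2 * h j ≤ 0 := mul_nonpos_of_nonneg_of_nonpos (sq_nonneg σ) hc
    linarith
  -- assemble
  refine ⟨hσpos, σ⁻¹ • (E *ᵥ (h : Fin n → ℝ)), (fun j => h j), ?_, hhpos, ?_, ?_, ?_⟩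
  · intro i
    exact mul_pos (inv_pos.2 hσpos) (hEh i)
  · funext i
    simp only [Pi.smul_apply, smul_eq_mul]
    field_simp
  · funext j
    rw [Matrix.mulVec_smul]
    simp only [Pi.smul_apply, smul_eq_mul]
    rw [show (Eᵀ *ᵥ (E *ᵥ fun j => h j)) j = σ ^ 2 * h j from hchain j]
    field_simp
  · rw [Matrix.fromBlocks_mulVec]
    funext z
    cases z with
    | inl i =>
      simp only [Sum.elim_inl, Pi.add_apply, Matrix.zero_mulVec, Pi.zero_apply, zero_add,
        Pi.smul_apply, smul_eq_mul]
      show (E *ᵥ fun j => h j) i = σ * (σ⁻¹ * (E *ᵥ (h : Fin n → ℝ)) i)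
      field_simp
    | inr j =>
      simp only [Sum.elim_inr, Pi.add_apply, Matrix.zero_mulVec, Pi.zero_apply, add_zero,
        Pi.smul_apply, smul_eq_mul]
      show (Eᵀ *ᵥ (σ⁻¹ • (E *ᵥ (h : Fin n → ℝ)))) j = σ * h j
      rw [Matrix.mulVec_smul]
      simp only [Pi.smul_apply, smul_eq_mul]
      rw [hchain j]
      field_simp
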